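/- For all integers n ≥ 1, the following identity holds in Q(x_1,…,x_n,y_1,…,y_n). Let G be the group of pairs w = (σ,η) with σ ∈ S_n and η ∈ {±1}^n, acting by the Q-algebra automorphism sending x_i to x_{σ(i)}^{η_i} and fixing each y_j, with sgn(w) := sgn(σ)·∏_{i=1}^n η_i. Then [∏_{1≤i<j≤n}(1 − x_j/x_i)(1 − x_i^{−1}x_j^{−1}) · ∏_{i=1}^n (1 − x_i^{−2}) · ∏_{1≤j<k≤n}(1 − y_k/y_j)(1 − y_j^{−1}y_k^{−1})] / [∏_{i=1}^n ∏_{j=1}^n (1 + x_i^{−1}y_j^{−1}) · ∏_{1≤i≤j≤n}(1 + y_j/x_i) · ∏_{1≤j<i≤n}(1 + x_i/y_j)] = Σ_{w=(σ,η)∈G} sgn(w) / ∏_{i=1}^{n} (1 + y_i·x_{σ(i)}^{−η_i}). -/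

import Mathlib

open Finset

lemma prod2_split {K : Type*} [CommMonoid K] {m : ℕ} (g : Fin (m+1) → Fin (m+1) → K) :
    ∏ i, ∏ j, g i j =
      ((∏ i : Fin m, ∏ j : Fin m, g i.castSucc j.castSucc) *
        ∏ i : Fin m, g i.castSucc (Fin.last m)) *
      ((∏ j : Fin m, g (Fin.last m) j.castSucc) * g (Fin.last m) (Fin.last m)) := by
  rw [Fin.prod_univ_castSucc (f := fun i => ∏ j, g i j),
    Fin.prod_univ_castSucc (f := fun j => g (Fin.last m) j)]
  congr 1
  rw [← Finset.prod_mul_distrib]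
  exact Finset.prod_congr rfl fun i _ => Fin.prod_univ_castSucc _

lemma cauchy_det {K : Type*} [Field K] : ∀ (n : ℕ) (u v : Fin n → K), (∀ i j, u i + v j ≠ 0) →
    (Matrix.of fun i j => (u i + v j)⁻¹).det =
      (∏ i, ∏ j, if i < j then (u j - u i) * (v j - v i) else 1) / ∏ i, ∏ j, (u i + v j) := by
  intro n
  induction n with
  | zero => intro u v h; simp [Matrix.det_fin_zero]
  | succ m ih =>
    intro u v h
    set N := Fin.last m with hN
    set B : Matrix (Fin (m+1)) (Fin (m+1)) K :=
      Matrix.of fun i j => (u i + v N) * (u N + v j) * ((u N + v N)⁻¹ * (u i + v j)⁻¹) with hB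
    set L : Matrix (Fin (m+1)) (Fin (m+1)) K :=
      Matrix.of fun i j => if i = j then 1 else if j = N then -1 else 0 with hL
    set C : Matrix (Fin (m+1)) (Fin (m+1)) K :=
      Matrix.of fun i j => if i = N then 1
        else (u N - u i) * (v N - v j) * ((u N + v N)⁻¹ * (u i + v j)⁻¹) with hC
    have step1 : (Matrix.of fun i j : Fin (m+1) => (u i + v j)⁻¹).det
        = (∏ i, (u i + v N)⁻¹) * ((∏ j, (u N + v j)⁻¹) * ((u N + v N)^(m+1) * B.det)) := by
      have e1 : (Matrix.of fun i j : Fin (m+1) => (u i + v j)⁻¹)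
          = Matrix.of (fun i j => (u i + v N)⁻¹ *
              (Matrix.of (fun i j : Fin (m+1) => (u N + v j)⁻¹ * ((u N + v N) • B) i j)) i j) := by
        ext i j
        have h1 := h i N; have h2 := h N j; have h3 := h N N; have h4 := h i j
        simp only [Matrix.of_apply, Matrix.smul_apply, smul_eq_mul, hB]
        field_simp
      rw [e1, Matrix.det_mul_column, Matrix.det_mul_row, Matrix.det_smul]
      simp only [Fintype.card_fin, smul_eq_mul]
    have hBrow : ∀ j, B N j = 1 := by
      intro j
      have h2 := h N j; have h3 := h N N
      simp only [hB, Matrix.of_apply]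
      field_simp
    have hLdet : L.det = 1 := by
      rw [Matrix.det_of_upperTriangular]
      · simp [hL]
      · intro i j hij
        simp only [id] at hij
        have hjN : ¬ j = N := by
          rintro rfl; exact absurd (lt_of_lt_of_le hij (Fin.le_last i)) (lt_irrefl _)
        have hij' : ¬ i = j := fun hh => absurd hij (by rw [hh]; exact lt_irrefl _)
        simp [hL, hij', hjN]
    have hLB : L * B = C := by
      ext i j
      rw [Matrix.mul_apply]
      by_cases hi : i = N
      · subst hi
        rw [Finset.sum_eq_single N]
        · simp [hL, hBrow, hC]
        · intro k _ hk
          simp only [hL, Matrix.of_apply]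
          rw [if_neg (fun hh => hk hh.symm), if_neg hk, zero_mul]
        · simp
      · have key : ∀ k, L i k * B k j
            = (if k = i then B i j else 0) + (if k = N then -(B k j) else 0) := by
          intro k
          by_cases hk : k = i
          · subst hk; simp [hL, hi]
          · by_cases hkN : k = N
            · subst hkN; simp [hL, hi, hk]
            · have hik : ¬ i = k := fun hh => hk hh.symm
              simp [hL, hk, hkN, hik]
        rw [Finset.sum_congr rfl (fun k _ => key k), Finset.sum_add_distrib,
          Finset.sum_ite_eq' _ i, Finset.sum_ite_eq' _ N]
        simp only [Finset.mem_univ, if_true, hBrow]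
        have h3 := h N N; have h4 := h i j; have h1 := h i N; have h2 := h N j
        simp only [hB, hC, Matrix.of_apply, if_neg hi]
        field_simp
        ring
    have hBdet : B.det = C.det := by
      have := congrArg Matrix.det hLB
      rwa [Matrix.det_mul, hLdet, one_mul] at this
    -- minor of C
    have h' : ∀ i j : Fin m, (u ∘ Fin.castSucc) i + (v ∘ Fin.castSucc) j ≠ 0 :=
      fun i j => h _ _
    have hCdet : C.det = (∏ i : Fin m, (u N - u i.castSucc)) *
        ((∏ j : Fin m, (v N - v j.castSucc)) * (((u N + v N)⁻¹)^m *
          ((∏ i : Fin m, ∏ j : Fin m, if i < j then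
              (u j.castSucc - u i.castSucc) * (v j.castSucc - v i.castSucc) else 1) /
            ∏ i : Fin m, ∏ j : Fin m, (u i.castSucc + v j.castSucc)))) := by
      rw [Matrix.det_succ_column C N, Finset.sum_eq_single N]
      · have hm : C.submatrix N.succAbove N.succAbove
            = Matrix.of (fun i j : Fin m => (u N - u i.castSucc) *
                (Matrix.of (fun i j : Fin m => (v N - v j.castSucc) *
                  (((u N + v N)⁻¹) • Matrix.of (fun i j : Fin m =>
                    ((u ∘ Fin.castSucc) i + (v ∘ Fin.castSucc) j)⁻¹)) i j)) i j) := by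
          ext i j
          have hiN : ¬ (Fin.castSucc i) = N := (Fin.castSucc_lt_last i).ne
          simp only [hN, Fin.succAbove_last, Matrix.submatrix_apply, hC, Matrix.of_apply,
            Matrix.smul_apply, smul_eq_mul, if_neg hiN, Function.comp]
          rw [if_neg (Fin.castSucc_lt_last i).ne]; ring
        rw [hm, Matrix.det_mul_column, Matrix.det_mul_row, Matrix.det_smul, ih _ _ h']
        have hCNN : C N N = 1 := by simp [hC]
        have hsgn : ((-1 : K)) ^ ((N : ℕ) + (N : ℕ)) = 1 := by
          rw [hN]; simpa using Even.neg_one_pow (⟨m, rfl⟩ : Even ((Fin.last m : ℕ) + m))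
        rw [hCNN, hsgn]
        simp only [Fintype.card_fin, smul_eq_mul, Function.comp]
        ring
      · intro k _ hk
        have : C k N = 0 := by
          simp only [hC, Matrix.of_apply, if_neg hk]
          ring
        rw [this]; ring
      · simp
    rw [step1, hBdet, hCdet,
      prod2_split (g := fun i j => if i < j then (u j - u i) * (v j - v i) else 1),
      prod2_split (g := fun i j => (u i + v j))]
    have hnl : ∀ j : Fin m, ¬ ((Fin.last m) < j.castSucc) := fun j => (Fin.castSucc_lt_last j).asymm
    simp only [hN]
    simp only [Fin.castSucc_lt_castSucc_iff, Fin.castSucc_lt_last, if_true,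
      lt_irrefl, if_false, hnl, Finset.prod_const_one, mul_one, one_mul]
    rw [Fin.prod_univ_castSucc (f := fun i => (u i + v (Fin.last m))⁻¹),
      Fin.prod_univ_castSucc (f := fun j => (u (Fin.last m) + v j)⁻¹),
      Finset.prod_inv_distrib, Finset.prod_inv_distrib, Finset.prod_mul_distrib]
    have ha := h (Fin.last m) (Fin.last m)
    have hP1 : (∏ i : Fin m, (u i.castSucc + v (Fin.last m))) ≠ 0 :=
      Finset.prod_ne_zero_iff.mpr fun i _ => h _ _
    have hP2 : (∏ j : Fin m, (u (Fin.last m) + v j.castSucc)) ≠ 0 :=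
      Finset.prod_ne_zero_iff.mpr fun j _ => h _ _
    have hDm : (∏ i : Fin m, ∏ j : Fin m, (u i.castSucc + v j.castSucc)) ≠ 0 :=
      Finset.prod_ne_zero_iff.mpr fun i _ => Finset.prod_ne_zero_iff.mpr fun j _ => h _ _
    set a := u (Fin.last m) + v (Fin.last m) with hadef
    set p1 := ∏ i : Fin m, (u i.castSucc + v (Fin.last m)) with hp1def
    set p2 := ∏ j : Fin m, (u (Fin.last m) + v j.castSucc) with hp2def
    set dm := ∏ i : Fin m, ∏ j : Fin m, (u i.castSucc + v j.castSucc) with hdmdef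
    have ham : a ^ m ≠ 0 := pow_ne_zero _ ha
    field_simp
    rw [div_pow, one_pow, pow_succ]; field_simp

-- key pointwise identity for the eta-sum
lemma key1 {K : Type*} [Field K] (a b : K) (ha : a ≠ 0) (hb : b ≠ 0)
    (hab : a + b ≠ 0) (hab1 : 1 + a * b ≠ 0) :
    (1 + b * a⁻¹)⁻¹ - (1 + b * a)⁻¹ = (a - a⁻¹) * ((a + a⁻¹ + (b + b⁻¹))⁻¹) := by
  have e1 : 1 + b * a⁻¹ = (a + b) * a⁻¹ := by field_simp
  have e2 : 1 + b * a = 1 + a * b := by ring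
  have e3 : a + a⁻¹ + (b + b⁻¹) = ((a + b) * (1 + a * b)) * (a⁻¹ * b⁻¹) := by
    field_simp; ring
  rw [e1, e2, e3]
  field_simp
  ring

lemma key2 {K : Type*} [Field K] (a b : K) (ha : a ≠ 0) (hb : b ≠ 0) :
    (1 - b / a) * (1 - a⁻¹ * b⁻¹) = ((a + a⁻¹) - (b + b⁻¹)) * a⁻¹ := by
  field_simp
  ring

lemma key3 {K : Type*} [Field K] (a : K) (ha : a ≠ 0) :
    1 - a ^ (-2 : ℤ) = (a - a⁻¹) * a⁻¹ := by
  rw [show (-2 : ℤ) = -(2 : ℕ) by norm_num, zpow_neg, zpow_natCast]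
  field_simp

lemma key4 {K : Type*} [Field K] (a b : K) (ha : a ≠ 0) (hb : b ≠ 0) :
    (1 + a⁻¹ * b⁻¹) * (1 + b / a) = ((a + a⁻¹) + (b + b⁻¹)) * a⁻¹ := by
  field_simp
  ring

lemma key5 {K : Type*} [Field K] (a b : K) (ha : a ≠ 0) (hb : b ≠ 0) :
    (1 + a⁻¹ * b⁻¹) * (1 + a / b) = ((a + a⁻¹) + (b + b⁻¹)) * b⁻¹ := by
  field_simp
  ring

lemma prod_Ioi_eq {K : Type*} [CommMonoid K] {n : ℕ} (i : Fin n) (f : Fin n → K) :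
    ∏ j ∈ Finset.Ioi i, f j = ∏ j, if i < j then f j else 1 := by
  rw [show Finset.Ioi i = Finset.univ.filter (fun j => i < j) from by ext; simp,
    Finset.prod_filter]

lemma prod_Iic_eq {K : Type*} [CommMonoid K] {n : ℕ} (j : Fin n) (f : Fin n → K) :
    ∏ i ∈ Finset.Iic j, f i = ∏ i, if i ≤ j then f i else 1 := by
  rw [show Finset.Iic j = Finset.univ.filter (fun i => i ≤ j) from by ext; simp,
    Finset.prod_filter]

lemma Dnn_lhs_eq {K : Type*} [Field K] (n : ℕ) (x y : Fin n → K)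
    (hx0 : ∀ i, x i ≠ 0) (hy0 : ∀ j, y j ≠ 0)
    (huv : ∀ i j, (x i + (x i)⁻¹) + (y j + (y j)⁻¹) ≠ 0) :
    ((∏ i : Fin n, ∏ j ∈ Finset.Ioi i,
        ((1 - x j / x i) * (1 - (x i)⁻¹ * (x j)⁻¹))) *
      (∏ i : Fin n, (1 - x i ^ (-2 : ℤ))) *
      (∏ j : Fin n, ∏ k ∈ Finset.Ioi j,
        ((1 - y k / y j) * (1 - (y j)⁻¹ * (y k)⁻¹)))) /
    ((∏ i : Fin n, ∏ j : Fin n, (1 + (x i)⁻¹ * (y j)⁻¹)) *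
      (∏ j : Fin n, ∏ i ∈ Finset.Iic j, (1 + y j / x i)) *
      (∏ j : Fin n, ∏ i ∈ Finset.Ioi j, (1 + x i / y j))) =
    (∏ i, (x i - (x i)⁻¹)) *
      ((∏ i, ∏ j, if i < j then
          ((x j + (x j)⁻¹) - (x i + (x i)⁻¹)) * ((y j + (y j)⁻¹) - (y i + (y i)⁻¹)) else 1) /
        ∏ i, ∏ j, ((x i + (x i)⁻¹) + (y j + (y j)⁻¹))) := by
  set u : Fin n → K := fun i => x i + (x i)⁻¹ with hu
  set v : Fin n → K := fun j => y j + (y j)⁻¹ with hv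
  set PA := ∏ i, ∏ j, (if i ≤ j then (x i)⁻¹ else 1) with hPA
  set PC := ∏ i : Fin n, ∏ j : Fin n, (if i < j then (y i)⁻¹ else 1) with hPC
  set V := ∏ i, ∏ j, (if i < j then (u j - u i) * (v j - v i) else 1) with hV
  set UV := ∏ i, ∏ j, (u i + v j) with hUV
  set Xc := ∏ i, (x i - (x i)⁻¹) with hXc
  -- numerator
  have hnum : ((∏ i : Fin n, ∏ j ∈ Finset.Ioi i,
        ((1 - x j / x i) * (1 - (x i)⁻¹ * (x j)⁻¹))) *
      (∏ i : Fin n, (1 - x i ^ (-2 : ℤ))) *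
      (∏ j : Fin n, ∏ k ∈ Finset.Ioi j,
        ((1 - y k / y j) * (1 - (y j)⁻¹ * (y k)⁻¹))))
      = (V * Xc) * (PA * PC) := by
    rw [Finset.prod_congr rfl (fun i _ => prod_Ioi_eq i _),
      Finset.prod_congr rfl (fun j _ => prod_Ioi_eq j
        (fun k => (1 - y k / y j) * (1 - (y j)⁻¹ * (y k)⁻¹))),
      Finset.prod_congr rfl (fun i (_ : i ∈ univ) =>
        (show (1 - x i ^ (-2 : ℤ)) = ∏ j, if i = j then (1 - x i ^ (-2 : ℤ)) else 1 by
          rw [Finset.prod_ite_eq]; simp))]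
    rw [mul_assoc, ← Finset.prod_mul_distrib, ← Finset.prod_mul_distrib]
    have hpoint : ∀ i j : Fin n,
        ((if i < j then (1 - x j / x i) * (1 - (x i)⁻¹ * (x j)⁻¹) else 1) *
          ((if i = j then (1 - x i ^ (-2 : ℤ)) else 1) *
           (if i < j then (1 - y j / y i) * (1 - (y i)⁻¹ * (y j)⁻¹) else 1)))
        = ((if i < j then (u j - u i) * (v j - v i) else 1) *
            (if i = j then (x i - (x i)⁻¹) else 1)) *
          ((if i ≤ j then (x i)⁻¹ else 1) * (if i < j then (y i)⁻¹ else 1)) := by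
      intro i j
      rcases lt_trichotomy i j with hij | hij | hij
      · rw [if_pos hij, if_pos hij, if_pos hij, if_pos hij, if_neg hij.ne, if_neg hij.ne,
          if_pos hij.le, key2 (x i) (x j) (hx0 _) (hx0 _), key2 (y i) (y j) (hy0 _) (hy0 _)]
        simp only [hu, hv]
        ring
      · subst hij
        rw [if_neg (lt_irrefl i), if_neg (lt_irrefl i), if_neg (lt_irrefl i),
          if_neg (lt_irrefl i), if_pos rfl, if_pos rfl, if_pos le_rfl,
          key3 (x i) (hx0 _)]
        ring
      · rw [if_neg (asymm hij), if_neg (asymm hij), if_neg (asymm hij), if_neg (asymm hij),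
          if_neg hij.ne', if_neg hij.ne', if_neg (not_le_of_gt hij)]
        ring
    calc ∏ i, ((∏ j, if i < j then (1 - x j / x i) * (1 - (x i)⁻¹ * (x j)⁻¹) else 1) *
            ((∏ j, if i = j then (1 - x i ^ (-2 : ℤ)) else 1) *
             (∏ j, if i < j then (1 - y j / y i) * (1 - (y i)⁻¹ * (y j)⁻¹) else 1)))
        = ∏ i, ∏ j, (((if i < j then (u j - u i) * (v j - v i) else 1) *
            (if i = j then (x i - (x i)⁻¹) else 1)) *
          ((if i ≤ j then (x i)⁻¹ else 1) * (if i < j then (y i)⁻¹ else 1))) := by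
          refine Finset.prod_congr rfl fun i _ => ?_
          rw [← Finset.prod_mul_distrib, ← Finset.prod_mul_distrib]
          exact Finset.prod_congr rfl fun j _ => hpoint i j
      _ = (V * Xc) * (PA * PC) := by
          simp only [Finset.prod_mul_distrib, hPA, hPC, hV, hXc]
          congr 1
          congr 1
          refine Finset.prod_congr rfl fun i _ => ?_
          rw [Finset.prod_ite_eq]
          simp
  -- denominator
  have hden : ((∏ i : Fin n, ∏ j : Fin n, (1 + (x i)⁻¹ * (y j)⁻¹)) *
      (∏ j : Fin n, ∏ i ∈ Finset.Iic j, (1 + y j / x i)) *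
      (∏ j : Fin n, ∏ i ∈ Finset.Ioi j, (1 + x i / y j)))
      = UV * (PA * PC) := by
    rw [Finset.prod_congr rfl (fun j (_ : j ∈ univ) => prod_Iic_eq j (fun i => 1 + y j / x i)),
      Finset.prod_congr rfl (fun j (_ : j ∈ univ) => prod_Ioi_eq j (fun i => 1 + x i / y j)),
      Finset.prod_comm (f := fun j i => if i ≤ j then 1 + y j / x i else 1),
      Finset.prod_comm (f := fun j i => if j < i then 1 + x i / y j else 1)]
    rw [mul_assoc, ← Finset.prod_mul_distrib, ← Finset.prod_mul_distrib]
    have hqoint : ∀ i j : Fin n,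
        ((1 + (x i)⁻¹ * (y j)⁻¹) *
          ((if i ≤ j then 1 + y j / x i else 1) * (if j < i then 1 + x i / y j else 1)))
        = (u i + v j) * ((if i ≤ j then (x i)⁻¹ else 1) * (if j < i then (y j)⁻¹ else 1)) := by
      intro i j
      rcases le_or_gt i j with hij | hij
      · rw [if_pos hij, if_pos hij, if_neg (not_lt_of_ge hij), if_neg (not_lt_of_ge hij),
          ← mul_assoc, key4 (x i) (y j) (hx0 _) (hy0 _)]
        simp only [hu, hv]; ring
      · rw [if_neg (not_le_of_gt hij), if_neg (not_le_of_gt hij), if_pos hij, if_pos hij]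
        simp only [one_mul, hu, hv]
        exact key5 (x i) (y j) (hx0 _) (hy0 _)
    calc ∏ i, ((∏ j, (1 + (x i)⁻¹ * (y j)⁻¹)) *
            ((∏ j, if i ≤ j then 1 + y j / x i else 1) *
             (∏ j, if j < i then 1 + x i / y j else 1)))
        = ∏ i, ∏ j, ((u i + v j) *
            ((if i ≤ j then (x i)⁻¹ else 1) * (if j < i then (y j)⁻¹ else 1))) := by
          refine Finset.prod_congr rfl fun i _ => ?_
          rw [← Finset.prod_mul_distrib, ← Finset.prod_mul_distrib]
          exact Finset.prod_congr rfl fun j _ => hqoint i j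
      _ = UV * (PA * PC) := by
          simp only [Finset.prod_mul_distrib, hPA, hPC, hUV]
          congr 1
          congr 1
          exact (Finset.prod_comm (f := fun a b => if a < b then (y a)⁻¹ else 1)).symm
  rw [hnum, hden]
  have hPA0 : PA ≠ 0 := Finset.prod_ne_zero_iff.mpr fun i _ =>
    Finset.prod_ne_zero_iff.mpr fun j _ => by
      split
      · exact inv_ne_zero (hx0 _)
      · exact one_ne_zero
  have hPC0 : PC ≠ 0 := Finset.prod_ne_zero_iff.mpr fun i _ =>
    Finset.prod_ne_zero_iff.mpr fun j _ => by
      split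
      · exact inv_ne_zero (hy0 _)
      · exact one_ne_zero
  rw [mul_div_mul_right _ _ (mul_ne_zero hPA0 hPC0), mul_comm V Xc, mul_div_assoc]

lemma Dnn_rhs_eq {K : Type*} [Field K] (n : ℕ) (x y : Fin n → K)
    (hx0 : ∀ i, x i ≠ 0) (hy0 : ∀ j, y j ≠ 0)
    (hxy : ∀ i j, x i + y j ≠ 0) (h1xy : ∀ i j, 1 + x i * y j ≠ 0) :
    (∑ σ : Equiv.Perm (Fin n), ∑ η : Fin n → ℤˣ,
      (((Equiv.Perm.sign σ * ∏ i, η i : ℤˣ) : ℤ) : K) /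
        ∏ i : Fin n, (1 + y i * x (σ i) ^ (-((η i) : ℤ))))
    = (∏ i, (x i - (x i)⁻¹)) *
        (Matrix.of fun i j => ((x i + (x i)⁻¹) + (y j + (y j)⁻¹))⁻¹).det := by
  set u : Fin n → K := fun i => x i + (x i)⁻¹ with hu
  set v : Fin n → K := fun j => y j + (y j)⁻¹ with hv
  have hσ : ∀ σ : Equiv.Perm (Fin n),
      (∑ η : Fin n → ℤˣ, (((Equiv.Perm.sign σ * ∏ i, η i : ℤˣ) : ℤ) : K) /
        ∏ i : Fin n, (1 + y i * x (σ i) ^ (-((η i) : ℤ))))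
      = (((Equiv.Perm.sign σ : ℤˣ) : ℤ) : K) *
          ((∏ i, (x i - (x i)⁻¹)) * ∏ i, (u (σ i) + v i)⁻¹) := by
    intro σ
    have step : ∀ η : Fin n → ℤˣ,
        (((Equiv.Perm.sign σ * ∏ i, η i : ℤˣ) : ℤ) : K) /
          ∏ i : Fin n, (1 + y i * x (σ i) ^ (-((η i) : ℤ)))
        = (((Equiv.Perm.sign σ : ℤˣ) : ℤ) : K) *
            ∏ i, ((((η i : ℤˣ) : ℤ) : K) * (1 + y i * x (σ i) ^ (-((η i) : ℤ)))⁻¹) := by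
      intro η
      rw [Finset.prod_mul_distrib, div_eq_mul_inv, ← Finset.prod_inv_distrib]
      push_cast
      ring
    rw [Finset.sum_congr rfl (fun η _ => step η), ← Finset.mul_sum]
    congr 1
    have hpi := Finset.sum_prod_piFinset (Finset.univ : Finset ℤˣ)
      (fun (i : Fin n) (e : ℤˣ) => (((e : ℤˣ) : ℤ) : K) * (1 + y i * x (σ i) ^ (-((e : ℤˣ) : ℤ)))⁻¹)
    rw [Fintype.piFinset_univ] at hpi
    rw [hpi]
    have hsum : ∀ i, (∑ e : ℤˣ, ((((e : ℤˣ) : ℤ) : K) * (1 + y i * x (σ i) ^ (-((e : ℤˣ) : ℤ)))⁻¹))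
        = (x (σ i) - (x (σ i))⁻¹) * (u (σ i) + v i)⁻¹ := by
      intro i
      have huniv : (Finset.univ : Finset ℤˣ) = {1, -1} := by decide
      rw [huniv, Finset.sum_pair (by decide : (1 : ℤˣ) ≠ -1)]
      have e1 : ((((1 : ℤˣ) : ℤ)) : K) = 1 := by norm_num
      have e2 : ((((-1 : ℤˣ) : ℤ)) : K) = -1 := by norm_num
      rw [e1, e2]
      have z1 : x (σ i) ^ (-((1 : ℤˣ) : ℤ)) = (x (σ i))⁻¹ := by norm_num
      have z2 : x (σ i) ^ (-((-1 : ℤˣ) : ℤ)) = x (σ i) := by norm_num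
      rw [z1, z2, one_mul, neg_one_mul, ← sub_eq_add_neg]
      exact key1 (x (σ i)) (y i) (hx0 _) (hy0 _) (hxy _ _) (h1xy _ _)
    rw [Finset.prod_congr rfl (fun i _ => hsum i), Finset.prod_mul_distrib,
      Equiv.prod_comp σ (fun i => x i - (x i)⁻¹)]
  rw [Finset.sum_congr rfl (fun σ _ => hσ σ), Matrix.det_apply]
  rw [Finset.mul_sum]
  refine Finset.sum_congr rfl fun σ _ => ?_
  rw [Units.smul_def, zsmul_eq_mul]
  simp only [Matrix.of_apply]
  push_cast
  ring_nf
  simp only [hu, hv, add_assoc]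

/-- Weyl denominator identity for `D(n,n) = osp(2n|2n)` with `Δ^#` of type
`C_n`, in `ℚ(x₁,…,x_n,y₁,…,y_n)`, with `xᵢ = e^{εᵢ}`, `yⱼ = e^{δⱼ}`;
`W^#` of type `C_n` is modelled by all pairs `(σ,η)` with `σ ∈ S_n`,
`η ∈ {±1}^n`, acting by `xᵢ ↦ x_{σ(i)}^{ηᵢ}`, with sign `sgn(σ)·∏ηᵢ`;
here `ρ = 0`. -/
theorem Dnn_denominator_identity (n : ℕ) (hn : 1 ≤ n)
    (K : Type*) [Field K] [Algebra (MvPolynomial (Fin n ⊕ Fin n) ℚ) K]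
    [IsFractionRing (MvPolynomial (Fin n ⊕ Fin n) ℚ) K]
    (x : Fin n → K) (y : Fin n → K)
    (hx : ∀ i, x i = algebraMap (MvPolynomial (Fin n ⊕ Fin n) ℚ) K
      (MvPolynomial.X (Sum.inl i)))
    (hy : ∀ j, y j = algebraMap (MvPolynomial (Fin n ⊕ Fin n) ℚ) K
      (MvPolynomial.X (Sum.inr j))) :
    ((∏ i : Fin n, ∏ j ∈ Finset.Ioi i,
        ((1 - x j / x i) * (1 - (x i)⁻¹ * (x j)⁻¹))) *
      (∏ i : Fin n, (1 - x i ^ (-2 : ℤ))) *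
      (∏ j : Fin n, ∏ k ∈ Finset.Ioi j,
        ((1 - y k / y j) * (1 - (y j)⁻¹ * (y k)⁻¹)))) /
    ((∏ i : Fin n, ∏ j : Fin n, (1 + (x i)⁻¹ * (y j)⁻¹)) *
      (∏ j : Fin n, ∏ i ∈ Finset.Iic j, (1 + y j / x i)) *
      (∏ j : Fin n, ∏ i ∈ Finset.Ioi j, (1 + x i / y j))) =
    ∑ σ : Equiv.Perm (Fin n), ∑ η : Fin n → ℤˣ,
      (((Equiv.Perm.sign σ * ∏ i, η i : ℤˣ) : ℤ) : K) /
        ∏ i : Fin n, (1 + y i * x (σ i) ^ (-((η i) : ℤ))) := by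
  have hinj : Function.Injective (algebraMap (MvPolynomial (Fin n ⊕ Fin n) ℚ) K) :=
    IsFractionRing.injective _ _
  have hmap : ∀ p : MvPolynomial (Fin n ⊕ Fin n) ℚ, p ≠ 0 →
      algebraMap (MvPolynomial (Fin n ⊕ Fin n) ℚ) K p ≠ 0 := by
    intro p hp h0
    exact hp (hinj (by rw [h0, map_zero]))
  have hx0 : ∀ i, x i ≠ 0 := by
    intro i; rw [hx i]; exact hmap _ (MvPolynomial.X_ne_zero _)
  have hy0 : ∀ j, y j ≠ 0 := by
    intro j; rw [hy j]; exact hmap _ (MvPolynomial.X_ne_zero _)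
  have hxy : ∀ i j, x i + y j ≠ 0 := by
    intro i j
    rw [hx i, hy j, ← map_add]
    refine hmap _ fun h0 => ?_
    have := congrArg (MvPolynomial.eval
      (fun s : Fin n ⊕ Fin n => if s = Sum.inl i then (1 : ℚ) else 0)) h0
    simp at this
  have h1xy : ∀ i j, 1 + x i * y j ≠ 0 := by
    intro i j
    rw [hx i, hy j, ← map_mul, ← map_one (algebraMap (MvPolynomial (Fin n ⊕ Fin n) ℚ) K),
      ← map_add]
    refine hmap _ fun h0 => ?_
    have := congrArg (MvPolynomial.eval (fun _ : Fin n ⊕ Fin n => (0 : ℚ))) h0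
    simp at this
  have huv : ∀ i j, (x i + (x i)⁻¹) + (y j + (y j)⁻¹) ≠ 0 := by
    intro i j
    have e : (x i + (x i)⁻¹) + (y j + (y j)⁻¹)
        = ((x i + y j) * (1 + x i * y j)) * ((x i)⁻¹ * (y j)⁻¹) := by
      have h1 := hx0 i; have h2 := hy0 j
      field_simp; ring
    rw [e]
    exact mul_ne_zero (mul_ne_zero (hxy i j) (h1xy i j))
      (mul_ne_zero (inv_ne_zero (hx0 i)) (inv_ne_zero (hy0 j)))
  have hdet : (Matrix.of fun i j => ((x i + (x i)⁻¹) + (y j + (y j)⁻¹))⁻¹).det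
      = (∏ i, ∏ j, if i < j then
          ((x j + (x j)⁻¹) - (x i + (x i)⁻¹)) * ((y j + (y j)⁻¹) - (y i + (y i)⁻¹)) else 1) /
        ∏ i, ∏ j, ((x i + (x i)⁻¹) + (y j + (y j)⁻¹)) :=
    cauchy_det n (fun i => x i + (x i)⁻¹) (fun j => y j + (y j)⁻¹) huv
  rw [Dnn_lhs_eq n x y hx0 hy0 huv, Dnn_rhs_eq n x y hx0 hy0 hxy h1xy, hdet]
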